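/- Let ⟨I, ≤⟩ be a distributive almost-lattice. Then there exist subsets L and R of I (the left and right parts) with kernel ker(I) = {i : i ∨ j exists for all j ∈ I} such that: (1) L and R are downward closed; (2) if i, j ∈ L then i ∨ j exists and belongs to L, and similarly for R; (3) I = L ∪ R and ker(I) = L ∩ R; (4) L \ ker(I) ≠ ∅ iff R \ ker(I) ≠ ∅; (5) if i ∈ L \ ker(I) and j ∈ R \ ker(I) then i ∨ j does not exist; (6) if i ∈ L and j ∈ R then i ∧ j ∈ ker(I). -/
import Mathlib


/-- A distributive almost-lattice: a partial order with all binary meets such that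
joins exist for pairs with an upper bound, of any three elements two have an upper
bound, the distributive laws hold whenever both sides exist, and properties (v), (vi). -/
structure DistribAlmostLattice (I : Type*) [SemilatticeInf I] : Prop where
  join_exists : ∀ i j : I, (∃ k, i ≤ k ∧ j ≤ k) → ∃ k, IsLUB {i, j} k
  two_of_three : ∀ i₀ i₁ i₂ : I,
    (∃ k, i₀ ≤ k ∧ i₁ ≤ k) ∨ (∃ k, i₀ ≤ k ∧ i₂ ≤ k) ∨ (∃ k, i₁ ≤ k ∧ i₂ ≤ k)
  distrib_join : ∀ i j j' a b c : I, IsLUB {i, j} a → IsLUB {i, j'} b →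
    IsLUB {i, j ⊓ j'} c → c = a ⊓ b
  distrib_meet : ∀ i j j' a b : I, IsLUB {j, j'} a →
    IsLUB {i ⊓ j, i ⊓ j'} b → b = i ⊓ a
  no_ub_cases : ∀ i j j' : I, ¬ (∃ k, i ≤ k ∧ j ≤ k) →
    ((¬ ∃ k, i ≤ k ∧ j' ≤ k) ∧ ¬ ∃ k, i ≤ k ∧ j ⊓ j' ≤ k) ∨
    (∃ k, IsLUB {i, j'} k ∧ IsLUB {i, j ⊓ j'} k)
  meet_join_eq : ∀ i j j' : I, ¬ (∃ k, j ≤ k ∧ j' ≤ k) → IsLUB {i ⊓ j, i ⊓ j'} i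

private lemma pair_lub_left {α : Type*} [Preorder α] {i j k : α} (hk : IsLUB {i, j} k) :
    i ≤ k := hk.1 (Set.mem_insert _ _)

private lemma pair_lub_right {α : Type*} [Preorder α] {i j k : α} (hk : IsLUB {i, j} k) :
    j ≤ k := hk.1 (Set.mem_insert_of_mem _ rfl)

private lemma pair_lub_le {α : Type*} [Preorder α] {i j k u : α} (hk : IsLUB {i, j} k)
    (h1 : i ≤ u) (h2 : j ≤ u) : k ≤ u := by
  apply hk.2
  intro x hx
  rcases hx with rfl | hx
  · exact h1
  · rcases hx with rfl
    exact h2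

/-- Basic structure theorem for distributive almost-lattices: there are a left part `L`
and a right part `R` with kernel `L ∩ R = {i : i ∨ j exists for all j}` such that
`L` and `R` are downward closed and join-closed, `I = L ∪ R`, `L \ ker ≠ ∅ ↔ R \ ker ≠ ∅`,
elements of `L \ ker` and `R \ ker` have no join, and cross meets land in the kernel. -/
theorem stmt1 {I : Type*} [SemilatticeInf I] (h : DistribAlmostLattice I) :
    ∃ L R : Set I,
      (∀ i ∈ L, ∀ j, j ≤ i → j ∈ L) ∧
      (∀ i ∈ R, ∀ j, j ≤ i → j ∈ R) ∧
      (∀ i ∈ L, ∀ j ∈ L, ∃ k, IsLUB {i, j} k ∧ k ∈ L) ∧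
      (∀ i ∈ R, ∀ j ∈ R, ∃ k, IsLUB {i, j} k ∧ k ∈ R) ∧
      L ∪ R = Set.univ ∧
      L ∩ R = {i | ∀ j, ∃ k, IsLUB {i, j} k} ∧
      ((L \ (L ∩ R)).Nonempty ↔ (R \ (L ∩ R)).Nonempty) ∧
      (∀ i ∈ L \ (L ∩ R), ∀ j ∈ R \ (L ∩ R), ¬ ∃ k, IsLUB {i, j} k) ∧
      (∀ i ∈ L, ∀ j ∈ R, i ⊓ j ∈ L ∩ R) := by
  by_cases hker : ∀ i j : I, ∃ k, i ≤ k ∧ j ≤ k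
  · -- Every pair is compatible: take L = R = univ.
    refine ⟨Set.univ, Set.univ, fun _ _ _ _ => trivial, fun _ _ _ _ => trivial,
      ?_, ?_, by simp, ?_, Iff.rfl, ?_, fun _ _ _ _ => ⟨trivial, trivial⟩⟩
    · intro i _ j _
      obtain ⟨k, hk⟩ := h.join_exists i j (hker i j)
      exact ⟨k, hk, trivial⟩
    · intro i _ j _
      obtain ⟨k, hk⟩ := h.join_exists i j (hker i j)
      exact ⟨k, hk, trivial⟩
    · ext i
      simp only [Set.mem_inter_iff, Set.mem_univ, true_and, Set.mem_setOf_eq]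
      exact ⟨fun _ j => h.join_exists i j (hker i j), fun _ => trivial⟩
    · exact fun i hi j _ => absurd ⟨trivial, trivial⟩ hi.2
  · -- There is an incompatible pair a, b.
    obtain ⟨a, ha⟩ := not_forall.mp hker
    obtain ⟨b, hab⟩ := not_forall.mp ha
    set L : Set I := {i | ∃ k, i ≤ k ∧ a ≤ k} with hL
    set R : Set I := {i | ∃ k, i ≤ k ∧ b ≤ k} with hR
    -- Key lemma: an element compatible with both a and b is compatible with everything.
    have key : ∀ i : I, (∃ k, i ≤ k ∧ a ≤ k) → (∃ k, i ≤ k ∧ b ≤ k) →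
        ∀ j : I, ∃ k, i ≤ k ∧ j ≤ k := by
      rintro i ⟨c, hic, hac⟩ ⟨e, hie, hbe⟩ j
      rcases h.two_of_three j c e with ⟨w, hjw, hcw⟩ | ⟨w, hjw, hew⟩ | ⟨w, hcw, hew⟩
      · exact ⟨w, hic.trans hcw, hjw⟩
      · exact ⟨w, hie.trans hew, hjw⟩
      · exact absurd ⟨w, hac.trans hcw, hbe.trans hew⟩ hab
    -- Upper bounds of two elements of L (resp. R) exist, compatibly with a (resp. b).
    have ubL : ∀ i ∈ L, ∀ j ∈ L, ∃ u, i ≤ u ∧ j ≤ u ∧ a ≤ u := by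
      rintro i ⟨c, hic, hac⟩ j ⟨d, hjd, had⟩
      rcases h.two_of_three b c d with ⟨w, hbw, hcw⟩ | ⟨w, hbw, hdw⟩ | ⟨w, hcw, hdw⟩
      · exact absurd ⟨w, hac.trans hcw, hbw⟩ hab
      · exact absurd ⟨w, had.trans hdw, hbw⟩ hab
      · exact ⟨w, hic.trans hcw, hjd.trans hdw, hac.trans hcw⟩
    have ubR : ∀ i ∈ R, ∀ j ∈ R, ∃ u, i ≤ u ∧ j ≤ u ∧ b ≤ u := by
      rintro i ⟨c, hic, hbc⟩ j ⟨d, hjd, hbd⟩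
      rcases h.two_of_three a c d with ⟨w, haw, hcw⟩ | ⟨w, haw, hdw⟩ | ⟨w, hcw, hdw⟩
      · exact absurd ⟨w, haw, hbc.trans hcw⟩ hab
      · exact absurd ⟨w, haw, hbd.trans hdw⟩ hab
      · exact ⟨w, hic.trans hcw, hjd.trans hdw, hbc.trans hcw⟩
    refine ⟨L, R, ?_, ?_, ?_, ?_, ?_, ?_, ?_, ?_, ?_⟩
    · rintro i ⟨c, hic, hac⟩ j hji
      exact ⟨c, hji.trans hic, hac⟩
    · rintro i ⟨c, hic, hbc⟩ j hji
      exact ⟨c, hji.trans hic, hbc⟩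
    · intro i hi j hj
      obtain ⟨u, hiu, hju, hau⟩ := ubL i hi j hj
      obtain ⟨k, hk⟩ := h.join_exists i j ⟨u, hiu, hju⟩
      exact ⟨k, hk, ⟨u, pair_lub_le hk hiu hju, hau⟩⟩
    · intro i hi j hj
      obtain ⟨u, hiu, hju, hbu⟩ := ubR i hi j hj
      obtain ⟨k, hk⟩ := h.join_exists i j ⟨u, hiu, hju⟩
      exact ⟨k, hk, ⟨u, pair_lub_le hk hiu hju, hbu⟩⟩
    · ext i
      simp only [Set.mem_union, Set.mem_univ, iff_true]
      rcases h.two_of_three i a b with ⟨w, hw1, hw2⟩ | ⟨w, hw1, hw2⟩ | ⟨w, hw1, hw2⟩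
      · exact Or.inl ⟨w, hw1, hw2⟩
      · exact Or.inr ⟨w, hw1, hw2⟩
      · exact absurd ⟨w, hw1, hw2⟩ hab
    · ext i
      simp only [Set.mem_inter_iff, Set.mem_setOf_eq]
      constructor
      · rintro ⟨hiL, hiR⟩ j
        exact h.join_exists i j (key i hiL hiR j)
      · intro hi
        obtain ⟨k, hk⟩ := hi a
        obtain ⟨k', hk'⟩ := hi b
        exact ⟨⟨k, pair_lub_left hk, pair_lub_right hk⟩,
          ⟨k', pair_lub_left hk', pair_lub_right hk'⟩⟩
    · have hbR : b ∈ R \ (L ∩ R) := by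
        refine ⟨⟨b, le_refl b, le_refl b⟩, fun hm => ?_⟩
        obtain ⟨k, hbk, hak⟩ := hm.1
        exact hab ⟨k, hak, hbk⟩
      have haL : a ∈ L \ (L ∩ R) := by
        refine ⟨⟨a, le_refl a, le_refl a⟩, fun hm => ?_⟩
        obtain ⟨k, hak, hbk⟩ := hm.2
        exact hab ⟨k, hak, hbk⟩
      exact ⟨fun _ => ⟨b, hbR⟩, fun _ => ⟨a, haL⟩⟩
    · rintro i ⟨hiL, hiK⟩ j ⟨hjR, hjK⟩ ⟨k, hk⟩
      have hik : i ≤ k := pair_lub_left hk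
      have hjk : j ≤ k := pair_lub_right hk
      rcases h.two_of_three k a b with ⟨w, hkw, haw⟩ | ⟨w, hkw, hbw⟩ | ⟨w, haw, hbw⟩
      · exact hjK ⟨⟨w, hjk.trans hkw, haw⟩, hjR⟩
      · exact hiK ⟨hiL, ⟨w, hik.trans hkw, hbw⟩⟩
      · exact hab ⟨w, haw, hbw⟩
    · rintro i ⟨c, hic, hac⟩ j ⟨e, hje, hbe⟩
      exact ⟨⟨c, inf_le_left.trans hic, hac⟩, ⟨e, inf_le_right.trans hje, hbe⟩⟩
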